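/- Let R be a ring and S a multiplicative subset of R generated by normal elements; set 𝔞 := { r ∈ R | srt = 0 for some s, t ∈ S }, let π : R → R̄ := R/𝔞 and S̄ := π(S), so that S̄ is a (left and right) denominator set of R̄ with ass(S̄) = 0. Assume the set min(𝔞) of primes of R minimal over 𝔞 is finite and the prime radical 𝔫_{R̄} of R̄ is a nilpotent ideal (e.g. R is a one-sided Noetherian ring). Then: (1) the map min(𝔞) → min(S̄⁻¹R̄), 𝔭 ↦ S̄⁻¹π(𝔭), is a bijection, i.e. min(R⟨S⁻¹⟩) = { S̄⁻¹π(𝔭) | 𝔭 ∈ min(𝔞) }; (2) S̄⁻¹𝔫_{R̄} = 𝔫_{S̄⁻¹R̄}, and S̄⁻¹R̄ / S̄⁻¹𝔫_{R̄} ≅ S̄⁻¹R̄ / 𝔫_{S̄⁻¹R̄} ≅ S̃⁻¹R̃, where S̃ is the image of S̄ in R̃ := R̄/𝔫_{R̄} and is a denominator set of R̃ with zero assassinator. -/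

import Mathlib

/- Common framework: two-sided ideals, prime ideals, denominator sets and
   left localizations of (possibly noncommutative) rings, described
   axiomatically via their characteristic properties. -/

namespace BavulaMinPrimes

/-- A subset of a ring is a two-sided ideal. -/
def IsIdealSet {R : Type*} [Ring R] (I : Set R) : Prop :=
  (0 : R) ∈ I ∧ (∀ a ∈ I, ∀ b ∈ I, a + b ∈ I) ∧ (∀ a ∈ I, -a ∈ I) ∧
    ∀ a ∈ I, ∀ r : R, r * a ∈ I ∧ a * r ∈ I

/-- A (two-sided) prime ideal: a proper ideal `P` such that `A * B ⊆ P`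
implies `A ⊆ P` or `B ⊆ P` for all ideals `A`, `B`. -/
def IsPrimeIdealSet {R : Type*} [Ring R] (P : Set R) : Prop :=
  IsIdealSet P ∧ P ≠ Set.univ ∧
    ∀ A B : Set R, IsIdealSet A → IsIdealSet B →
      (∀ a ∈ A, ∀ b ∈ B, a * b ∈ P) → A ⊆ P ∨ B ⊆ P

/-- A completely prime ideal: the factor ring is a domain. -/
def IsCompletelyPrimeIdealSet {R : Type*} [Ring R] (P : Set R) : Prop :=
  IsIdealSet P ∧ P ≠ Set.univ ∧ ∀ a b : R, a * b ∈ P → a ∈ P ∨ b ∈ P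

/-- A minimal prime ideal of a ring. -/
def IsMinimalPrimeIdealSet {R : Type*} [Ring R] (P : Set R) : Prop :=
  IsPrimeIdealSet P ∧ ∀ P' : Set R, IsPrimeIdealSet P' → P' ⊆ P → P' = P

/-- A prime minimal over an ideal `A`. -/
def IsMinimalPrimeOver {R : Type*} [Ring R] (A P : Set R) : Prop :=
  IsPrimeIdealSet P ∧ A ⊆ P ∧
    ∀ P' : Set R, IsPrimeIdealSet P' → A ⊆ P' → P' ⊆ P → P' = P

/-- The set `min(R)` of minimal primes of `R`. -/
def minPrimes (R : Type*) [Ring R] : Set (Set R) := { P | IsMinimalPrimeIdealSet P }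

/-- The prime radical: intersection of all prime ideals. -/
def primeRadicalSet (R : Type*) [Ring R] : Set R :=
  { r : R | ∀ P : Set R, IsPrimeIdealSet P → r ∈ P }

/-- A ring is semiprime if its prime radical is zero. -/
def IsSemiprimeRing (R : Type*) [Ring R] : Prop := primeRadicalSet R = {0}

/-- A ring is prime if its zero ideal is a prime ideal. -/
def IsPrimeRing (R : Type*) [Ring R] : Prop := IsPrimeIdealSet ({0} : Set R)

/-- A multiplicative subset: `1 ∈ S`, `0 ∉ S`, closed under multiplication. -/
def IsMulSet {R : Type*} [Ring R] (S : Set R) : Prop :=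
  (1 : R) ∈ S ∧ (0 : R) ∉ S ∧ ∀ s ∈ S, ∀ t ∈ S, s * t ∈ S

/-- The left Ore condition: `S r ∩ R s ≠ ∅`. -/
def LeftOre {R : Type*} [Ring R] (S : Set R) : Prop :=
  ∀ r : R, ∀ s ∈ S, ∃ s' ∈ S, ∃ r' : R, s' * r = r' * s

/-- The right Ore condition: `r S ∩ s R ≠ ∅`. -/
def RightOre {R : Type*} [Ring R] (S : Set R) : Prop :=
  ∀ r : R, ∀ s ∈ S, ∃ s' ∈ S, ∃ r' : R, r * s' = s * r'

/-- A left denominator set: a left Ore multiplicative set such that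
`r s = 0` (with `s ∈ S`) implies `t r = 0` for some `t ∈ S`. -/
def IsLeftDenominatorSet {R : Type*} [Ring R] (S : Set R) : Prop :=
  IsMulSet S ∧ LeftOre S ∧ ∀ r : R, ∀ s ∈ S, r * s = 0 → ∃ t ∈ S, t * r = 0

/-- A right denominator set. -/
def IsRightDenominatorSet {R : Type*} [Ring R] (S : Set R) : Prop :=
  IsMulSet S ∧ RightOre S ∧ ∀ r : R, ∀ s ∈ S, s * r = 0 → ∃ t ∈ S, r * t = 0

/-- `ass_l(S) = { r | s r = 0 for some s ∈ S }`. -/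
def lAss {R : Type*} [Ring R] (S : Set R) : Set R := { r : R | ∃ s ∈ S, s * r = 0 }

/-- `f : R →+* Q` realizes `Q` as the left localization `S⁻¹R`:
elements of `S` become units, every element of `Q` is a left fraction
`(f s)⁻¹ (f r)`, and the kernel of `f` is `ass_l(S)`.  These properties
characterize `S⁻¹R` up to a unique `R`-isomorphism. -/
structure IsLeftLocalization {R Q : Type*} [Ring R] [Ring Q]
    (S : Set R) (f : R →+* Q) : Prop where
  isUnit : ∀ s ∈ S, IsUnit (f s)
  surj : ∀ q : Q, ∃ s ∈ S, ∃ r : R, f s * q = f r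
  ker : ∀ r : R, f r = 0 ↔ r ∈ lAss S

/-- `S⁻¹I = { s⁻¹ a | s ∈ S, a ∈ I }` as a subset of the localization `Q`:
`q ∈ S⁻¹I` iff `f s * q = f a` for some `s ∈ S`, `a ∈ I`. -/
def locSet {R Q : Type*} [Ring R] [Ring Q] (f : R →+* Q) (S : Set R)
    (I : Set R) : Set Q :=
  { q : Q | ∃ s ∈ S, ∃ a ∈ I, f s * q = f a }

/-- A normal element: `R n = n R`. -/
def IsNormalElement {R : Type*} [Ring R] (n : R) : Prop :=
  (∀ r : R, ∃ r' : R, r * n = n * r') ∧ ∀ r : R, ∃ r' : R, n * r = r' * n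

/-- A prime rich ring: every ideal contains a finite product of prime ideals
containing it (the empty product being the whole ring). -/
def IsPrimeRich (R : Type*) [Ring R] : Prop :=
  ∀ A : Set R, IsIdealSet A →
    ∃ (n : ℕ) (P : Fin n → Set R),
      (∀ i, IsPrimeIdealSet (P i) ∧ A ⊆ P i) ∧
      ∀ x : Fin n → R, (∀ i, x i ∈ P i) → (List.ofFn x).prod ∈ A

/-- An ideal which is finitely generated as a right `R`-module. -/
def IsFGRightIdeal {R : Type*} [Ring R] (I : Set R) : Prop :=
  ∃ (m : ℕ) (g : Fin m → R), (∀ i, g i ∈ I) ∧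
    ∀ x ∈ I, ∃ c : Fin m → R, x = ∑ i, g i * c i

/-- `𝔞 = { r ∈ R | s r t = 0 for some s, t ∈ S }`. -/
def twoSidedAss {R : Type*} [Ring R] (S : Set R) : Set R :=
  { r : R | ∃ s ∈ S, ∃ t ∈ S, s * r * t = 0 }

section AuxBasics

variable {R : Type*} [Ring R]

theorem IsIdealSet.zero' {I : Set R} (h : IsIdealSet I) : (0 : R) ∈ I := h.1

theorem IsIdealSet.add' {I : Set R} (h : IsIdealSet I) {a b : R} (ha : a ∈ I) (hb : b ∈ I) :
    a + b ∈ I := h.2.1 a ha b hb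

theorem IsIdealSet.neg' {I : Set R} (h : IsIdealSet I) {a : R} (ha : a ∈ I) : -a ∈ I :=
  h.2.2.1 a ha

theorem IsIdealSet.mulL {I : Set R} (h : IsIdealSet I) {a : R} (ha : a ∈ I) (r : R) :
    r * a ∈ I := (h.2.2.2 a ha r).1

theorem IsIdealSet.mulR {I : Set R} (h : IsIdealSet I) {a : R} (ha : a ∈ I) (r : R) :
    a * r ∈ I := (h.2.2.2 a ha r).2

theorem isIdealSet_univ : IsIdealSet (Set.univ : Set R) :=
  ⟨trivial, fun _ _ _ _ => trivial, fun _ _ => trivial, fun _ _ _ => ⟨trivial, trivial⟩⟩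

theorem IsIdealSet.eq_univ {I : Set R} (h : IsIdealSet I) (h1 : (1 : R) ∈ I) :
    I = Set.univ := by
  ext x
  simp only [Set.mem_univ, iff_true]
  simpa using h.mulL h1 x

theorem one_not_mem_of_prime {P : Set R} (hP : IsPrimeIdealSet P) : (1 : R) ∉ P :=
  fun h => hP.2.1 (hP.1.eq_univ h)

theorem isIdealSet_sInter {T : Set (Set R)} (h : ∀ I ∈ T, IsIdealSet I) :
    IsIdealSet (⋂₀ T) := by
  refine ⟨?_, ?_, ?_, ?_⟩
  · exact fun I hI => (h I hI).zero'
  · intro a ha b hb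
    exact fun I hI => (h I hI).add' (ha I hI) (hb I hI)
  · intro a ha
    exact fun I hI => (h I hI).neg' (ha I hI)
  · intro a ha r
    exact ⟨fun I hI => (h I hI).mulL (ha I hI) r, fun I hI => (h I hI).mulR (ha I hI) r⟩

theorem isIdealSet_primeRadical : IsIdealSet (primeRadicalSet R) := by
  refine ⟨?_, ?_, ?_, ?_⟩
  · exact fun P hP => hP.1.zero'
  · intro a ha b hb
    exact fun P hP => hP.1.add' (ha P hP) (hb P hP)
  · intro a ha
    exact fun P hP => hP.1.neg' (ha P hP)
  · intro a ha r
    exact ⟨fun P hP => hP.1.mulL (ha P hP) r, fun P hP => hP.1.mulR (ha P hP) r⟩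

theorem primeRadical_subset {P : Set R} (hP : IsPrimeIdealSet P) :
    primeRadicalSet R ⊆ P := fun _ hx => hx P hP

theorem listProd_mem {I : Set R} (hI : IsIdealSet I) :
    ∀ l : List R, (∃ a ∈ l, a ∈ I) → l.prod ∈ I := by
  intro l
  induction l with
  | nil => rintro ⟨a, ha, -⟩; simp at ha
  | cons b t ih =>
    rintro ⟨a, ha, haI⟩
    rw [List.prod_cons]
    rcases List.mem_cons.mp ha with rfl | ht
    · exact hI.mulR haI _
    · exact hI.mulL (ih ⟨a, ht, haI⟩) b

theorem prime_prod {P : Set R} (hP : IsPrimeIdealSet P) :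
    ∀ (k : ℕ) (J : Fin (k + 1) → Set R), (∀ i, IsIdealSet (J i)) →
      (∀ x : Fin (k + 1) → R, (∀ i, x i ∈ J i) → (List.ofFn x).prod ∈ P) →
      ∃ i, J i ⊆ P := by
  intro k
  induction k with
  | zero =>
    intro J hJ hx
    refine ⟨0, fun a ha => ?_⟩
    have := hx (fun _ => a) (fun i => by
      have : i = 0 := Fin.fin_one_eq_zero i
      rw [this]; exact ha)
    simpa using this
  | succ k ih =>
    intro J hJ hx
    set B : Set R := {b | ∀ a ∈ J 0, a * b ∈ P} with hBdef
    have hB : IsIdealSet B := by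
      refine ⟨?_, ?_, ?_, ?_⟩
      · intro a ha; simpa using hP.1.zero'
      · intro b hb c hc a ha
        have := hP.1.add' (hb a ha) (hc a ha)
        simpa [mul_add] using this
      · intro b hb a ha
        have := hP.1.neg' (hb a ha)
        simpa [mul_neg] using this
      · intro b hb r
        constructor
        · intro a ha
          have := hb (a * r) ((hJ 0).mulR ha r)
          simpa [mul_assoc] using this
        · intro a ha
          have := hP.1.mulR (hb a ha) r
          simpa [mul_assoc] using this
    have hpair : ∀ a ∈ J 0, ∀ b ∈ B, a * b ∈ P := fun a ha b hb => hb a ha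
    rcases hP.2.2 (J 0) B (hJ 0) hB hpair with h0 | hBP
    · exact ⟨0, h0⟩
    · have htail : ∀ x : Fin (k + 1) → R, (∀ i, x i ∈ J i.succ) →
          (List.ofFn x).prod ∈ P := by
        intro x hxx
        apply hBP
        show (List.ofFn x).prod ∈ B
        intro a ha
        have hmem : ∀ i, (Fin.cons a x : Fin (k+2) → R) i ∈ J i := by
          intro i
          refine Fin.cases ?_ ?_ i
          · simpa using ha
          · intro j; simpa using hxx j
        have := hx (Fin.cons a x) hmem
        rw [List.ofFn_succ] at this
        simp only [Fin.cons_zero, Fin.cons_succ, List.prod_cons] at this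
        exact this
      rcases ih (fun i => J i.succ) (fun i => hJ _) htail with ⟨i, hi⟩
      exact ⟨i.succ, hi⟩

end AuxBasics

theorem isUnit_mul_inv_cancel_left {M : Type*} [Monoid M] {x : M} (hu : IsUnit x) (y : M) :
    x * (↑hu.unit⁻¹ * y) = y := by
  have h := Units.mul_inv_cancel_left hu.unit y
  rwa [hu.unit_spec] at h
section AuxZorn

variable {R : Type*} [Ring R]

theorem exists_prime_ideal (h10 : (1 : R) ≠ 0) : ∃ P : Set R, IsPrimeIdealSet P := by
  have h0 : ({0} : Set R) ∈ {I : Set R | IsIdealSet I ∧ (1 : R) ∉ I} := by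
    constructor
    · refine ⟨rfl, ?_, ?_, ?_⟩
      · rintro a rfl b rfl; simp
      · rintro a rfl; simp
      · rintro a rfl r; simp
    · simpa using h10
  have hchainub : ∀ c ⊆ {I : Set R | IsIdealSet I ∧ (1 : R) ∉ I}, IsChain (· ⊆ ·) c → c.Nonempty →
      ∃ ub ∈ {I : Set R | IsIdealSet I ∧ (1 : R) ∉ I}, ∀ s ∈ c, s ⊆ ub := by
    intro c hcS hchain hcne
    refine ⟨⋃₀ c, ⟨?_, ?_⟩, fun s hs => Set.subset_sUnion_of_mem hs⟩
    · obtain ⟨I0, hI0⟩ := hcne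
      refine ⟨Set.mem_sUnion.mpr ⟨I0, hI0, (hcS hI0).1.zero'⟩, ?_, ?_, ?_⟩
      · rintro a ⟨I, hI, haI⟩ b ⟨J, hJ, hbJ⟩
        rcases hchain.total hI hJ with hIJ | hJI
        · exact ⟨J, hJ, (hcS hJ).1.add' (hIJ haI) hbJ⟩
        · exact ⟨I, hI, (hcS hI).1.add' haI (hJI hbJ)⟩
      · rintro a ⟨I, hI, haI⟩
        exact ⟨I, hI, (hcS hI).1.neg' haI⟩
      · rintro a ⟨I, hI, haI⟩ r
        exact ⟨⟨I, hI, (hcS hI).1.mulL haI r⟩, ⟨I, hI, (hcS hI).1.mulR haI r⟩⟩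
    · rintro ⟨I, hI, h1I⟩
      exact (hcS hI).2 h1I
  obtain ⟨M, -, hM⟩ := zorn_subset_nonempty {I : Set R | IsIdealSet I ∧ (1 : R) ∉ I} hchainub _ h0
  · obtain ⟨hMideal, hM1⟩ := hM.prop
    refine ⟨M, hMideal, ?_, ?_⟩
    · intro h; rw [h] at hM1; exact hM1 trivial
    · intro X Y hX hY hXY
      by_contra hcon
      push_neg at hcon
      obtain ⟨hXM, hYM⟩ := hcon
      obtain ⟨x0, hx0X, hx0M⟩ := Set.not_subset.mp hXM
      obtain ⟨y0, hy0Y, hy0M⟩ := Set.not_subset.mp hYM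
      -- M + X is an ideal containing M and x0
      set M' : Set R := {z | ∃ m ∈ M, ∃ x ∈ X, z = m + x} with hM'def
      have hM'ideal : IsIdealSet M' := by
        refine ⟨⟨0, hMideal.zero', 0, hX.zero', by simp⟩, ?_, ?_, ?_⟩
        · rintro a ⟨m1, hm1, x1, hx1, rfl⟩ b ⟨m2, hm2, x2, hx2, rfl⟩
          exact ⟨m1 + m2, hMideal.add' hm1 hm2, x1 + x2, hX.add' hx1 hx2, by abel⟩
        · rintro a ⟨m1, hm1, x1, hx1, rfl⟩
          exact ⟨-m1, hMideal.neg' hm1, -x1, hX.neg' hx1, by abel⟩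
        · rintro a ⟨m1, hm1, x1, hx1, rfl⟩ r
          constructor
          · exact ⟨r * m1, hMideal.mulL hm1 r, r * x1, hX.mulL hx1 r, by rw [mul_add]⟩
          · exact ⟨m1 * r, hMideal.mulR hm1 r, x1 * r, hX.mulR hx1 r, by rw [add_mul]⟩
      have hMM' : M ⊆ M' := fun m hm => ⟨m, hm, 0, hX.zero', by simp⟩
      have h1M' : (1 : R) ∈ M' := by
        by_contra h1M'
        have : M' = M := (hM.eq_of_subset ⟨hM'ideal, h1M'⟩ hMM').symm
        apply hx0M
        rw [← this]
        exact ⟨0, hMideal.zero', x0, hx0X, by simp⟩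
      obtain ⟨m, hm, x, hx, h1eq⟩ := h1M'
      apply hy0M
      have : y0 = m * y0 + x * y0 := by
        calc y0 = 1 * y0 := by simp
        _ = m * y0 + x * y0 := by rw [h1eq, add_mul]
      rw [this]
      exact hMideal.add' (hMideal.mulR hm y0) (hXY x hx y0 hy0Y)

theorem exists_minimal_prime_subset {P : Set R} (hP : IsPrimeIdealSet P) :
    ∃ p, IsMinimalPrimeIdealSet p ∧ p ⊆ P := by
  have hchainlb : ∀ c ⊆ {P' : Set R | IsPrimeIdealSet P' ∧ P' ⊆ P}, IsChain (· ⊆ ·) c → c.Nonempty →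
      ∃ lb ∈ {P' : Set R | IsPrimeIdealSet P' ∧ P' ⊆ P}, ∀ s ∈ c, lb ⊆ s := by
    intro c hcS hchain hcne
    obtain ⟨I0, hI0⟩ := hcne
    have hprime : IsPrimeIdealSet (⋂₀ c) := by
      refine ⟨isIdealSet_sInter (fun I hI => (hcS hI).1.1), ?_, ?_⟩
      · intro h
        have : (1 : R) ∈ ⋂₀ c := h ▸ trivial
        exact one_not_mem_of_prime (hcS hI0).1 (this I0 hI0)
      · intro X Y hX hY hXY
        by_contra hcon
        push_neg at hcon
        obtain ⟨hXm, hYm⟩ := hcon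
        obtain ⟨x0, hx0X, hx0m⟩ := Set.not_subset.mp hXm
        obtain ⟨y0, hy0Y, hy0m⟩ := Set.not_subset.mp hYm
        rw [Set.mem_sInter] at hx0m hy0m
        push_neg at hx0m hy0m
        obtain ⟨P1, hP1c, hx0P1⟩ := hx0m
        obtain ⟨P2, hP2c, hy0P2⟩ := hy0m
        have hpairs : ∀ T ∈ c, ∀ a ∈ X, ∀ b ∈ Y, a * b ∈ T := by
          intro T hT a ha b hb
          exact hXY a ha b hb T hT
        rcases hchain.total hP1c hP2c with h12 | h21
        · rcases (hcS hP1c).1.2.2 X Y hX hY (hpairs _ hP1c) with hc | hc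
          · exact hx0P1 (hc hx0X)
          · exact hy0P2 (h12 (hc hy0Y))
        · rcases (hcS hP2c).1.2.2 X Y hX hY (hpairs _ hP2c) with hc | hc
          · exact hx0P1 (h21 (hc hx0X))
          · exact hy0P2 (hc hy0Y)
    refine ⟨⋂₀ c, ⟨hprime, ?_⟩, fun s hs => Set.sInter_subset_of_mem hs⟩
    exact (Set.sInter_subset_of_mem hI0).trans (hcS hI0).2
  obtain ⟨m, hmP, hm⟩ := zorn_superset_nonempty {P' : Set R | IsPrimeIdealSet P' ∧ P' ⊆ P} hchainlb _ ⟨hP, subset_rfl⟩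
  refine ⟨m, ⟨hm.prop.1, ?_⟩, hm.prop.2⟩
  intro P' hP' hP'm
  exact hm.eq_of_subset ⟨hP', hP'm.trans hm.prop.2⟩ hP'm

theorem mem_primeRadical_iff_minimal {x : R} :
    x ∈ primeRadicalSet R ↔ ∀ p, IsMinimalPrimeIdealSet p → x ∈ p := by
  constructor
  · intro hx p hp
    exact hx p hp.1
  · intro hx P hP
    obtain ⟨p, hpmin, hpP⟩ := exists_minimal_prime_subset hP
    exact hpP (hx p hpmin)

end AuxZorn
section AuxHom

variable {R A : Type*} [Ring R] [Ring A] {g : R →+* A}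

theorem image_isIdeal (hg : Function.Surjective g) {I : Set R} (hI : IsIdealSet I) :
    IsIdealSet (g '' I) := by
  refine ⟨⟨0, hI.zero', map_zero g⟩, ?_, ?_, ?_⟩
  · rintro a ⟨x, hx, rfl⟩ b ⟨y, hy, rfl⟩
    exact ⟨x + y, hI.add' hx hy, map_add g x y⟩
  · rintro a ⟨x, hx, rfl⟩
    exact ⟨-x, hI.neg' hx, map_neg g x⟩
  · rintro a ⟨x, hx, rfl⟩ r
    obtain ⟨t, rfl⟩ := hg r
    exact ⟨⟨t * x, hI.mulL hx t, map_mul g t x⟩, ⟨x * t, hI.mulR hx t, map_mul g x t⟩⟩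

theorem preimage_isIdeal {J : Set A} (hJ : IsIdealSet J) : IsIdealSet (g ⁻¹' J) := by
  refine ⟨?_, ?_, ?_, ?_⟩
  · show g 0 ∈ J; rw [map_zero]; exact hJ.zero'
  · intro a ha b hb; show g (a + b) ∈ J; rw [map_add]; exact hJ.add' ha hb
  · intro a ha; show g (-a) ∈ J; rw [map_neg]; exact hJ.neg' ha
  · intro a ha r
    constructor
    · show g (r * a) ∈ J; rw [map_mul]; exact hJ.mulL ha (g r)
    · show g (a * r) ∈ J; rw [map_mul]; exact hJ.mulR ha (g r)

theorem image_preimage_hom (hg : Function.Surjective g) (X : Set A) :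
    g '' (g ⁻¹' X) = X := Set.image_preimage_eq X hg

theorem preimage_image_hom {p : Set R} (hp : IsIdealSet p)
    (hker : ∀ r : R, g r = 0 → r ∈ p) : g ⁻¹' (g '' p) = p := by
  ext x
  simp only [Set.mem_preimage]
  constructor
  · rintro ⟨w, hw, hwx⟩
    have : g (x - w) = 0 := by rw [map_sub, hwx, sub_self]
    have hxw := hker _ this
    have := hp.add' hxw hw
    simpa using this
  · intro hx; exact ⟨x, hx, rfl⟩

theorem image_isPrime (hg : Function.Surjective g) {p : Set R} (hp : IsPrimeIdealSet p)
    (hker : ∀ r : R, g r = 0 → r ∈ p) : IsPrimeIdealSet (g '' p) := by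
  refine ⟨image_isIdeal hg hp.1, ?_, ?_⟩
  · intro h
    have h1 : (1 : A) ∈ g '' p := h ▸ trivial
    obtain ⟨x, hx, hx1⟩ := h1
    have : g (x - 1) = 0 := by rw [map_sub, hx1, map_one, sub_self]
    have hx1p := hker _ this
    have h2 : x + -(x - 1) ∈ p := hp.1.add' hx (hp.1.neg' hx1p)
    have : x + -(x - 1) = 1 := by abel
    rw [this] at h2
    exact one_not_mem_of_prime hp h2
  · intro X Y hX hY hXY
    have hkX : ∀ x, g x ∈ X → ∀ y, g y ∈ Y → x * y ∈ p := by
      intro x hx y hy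
      have := hXY _ hx _ hy
      rw [← map_mul] at this
      obtain ⟨w, hw, hwx⟩ := this
      have : g (x * y - w) = 0 := by rw [map_sub, hwx, sub_self]
      have := hp.1.add' (hker _ this) hw
      simpa using this
    rcases hp.2.2 (g ⁻¹' X) (g ⁻¹' Y) (preimage_isIdeal hX) (preimage_isIdeal hY)
        (fun a ha b hb => hkX a ha b hb) with hc | hc
    · left
      intro x hx
      obtain ⟨t, rfl⟩ := hg x
      exact ⟨t, hc hx, rfl⟩
    · right
      intro y hy
      obtain ⟨t, rfl⟩ := hg y
      exact ⟨t, hc hy, rfl⟩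

theorem preimage_isPrime (hg : Function.Surjective g) {q : Set A} (hq : IsPrimeIdealSet q) :
    IsPrimeIdealSet (g ⁻¹' q) := by
  refine ⟨preimage_isIdeal hq.1, ?_, ?_⟩
  · intro h
    have : (1 : R) ∈ g ⁻¹' q := h ▸ trivial
    have : (1 : A) ∈ q := by simpa using this
    exact one_not_mem_of_prime hq this
  · intro X Y hX hY hXY
    have hpair : ∀ a ∈ g '' X, ∀ b ∈ g '' Y, a * b ∈ q := by
      rintro a ⟨x, hx, rfl⟩ b ⟨y, hy, rfl⟩
      rw [← map_mul]
      exact hXY x hx y hy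
    rcases hq.2.2 (g '' X) (g '' Y) (image_isIdeal hg hX) (image_isIdeal hg hY) hpair with hc | hc
    · left; intro x hx; exact hc ⟨x, hx, rfl⟩
    · right; intro y hy; exact hc ⟨y, hy, rfl⟩

theorem image_normal (hg : Function.Surjective g) {n : R} (hn : IsNormalElement n) :
    IsNormalElement (g n) := by
  constructor
  · intro b
    obtain ⟨r, rfl⟩ := hg b
    obtain ⟨r', hr'⟩ := hn.1 r
    exact ⟨g r', by rw [← map_mul, ← map_mul, hr']⟩
  · intro b
    obtain ⟨r, rfl⟩ := hg b
    obtain ⟨r', hr'⟩ := hn.2 r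
    exact ⟨g r', by rw [← map_mul, ← map_mul, hr']⟩

end AuxHom

section AuxEquiv

variable {R A : Type*} [Ring R] [Ring A] (e : R ≃+* A)

theorem equiv_image_isIdeal {I : Set R} (hI : IsIdealSet I) : IsIdealSet (e '' I) :=
  image_isIdeal (g := (e : R →+* A)) e.surjective hI

theorem equiv_image_isPrime {p : Set R} (hp : IsPrimeIdealSet p) :
    IsPrimeIdealSet (e '' p) := by
  refine image_isPrime (g := (e : R →+* A)) e.surjective hp ?_
  intro r hr
  have : r = 0 := by
    apply e.injective
    simpa using hr
  rw [this]; exact hp.1.zero'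

theorem equiv_image_isMinimalPrime {p : Set R} (hp : IsMinimalPrimeIdealSet p) :
    IsMinimalPrimeIdealSet (e '' p) := by
  refine ⟨equiv_image_isPrime e hp.1, ?_⟩
  intro P' hP' hsub
  have h1 : e.symm '' P' ⊆ p := by
    rintro x ⟨y, hy, rfl⟩
    obtain ⟨z, hz, hze⟩ := hsub hy
    have : e.symm y = z := by rw [← hze]; simp
    rw [this]; exact hz
  have h2 : IsPrimeIdealSet (e.symm '' P') := equiv_image_isPrime e.symm hP'
  have := hp.2 _ h2 h1
  rw [← this]
  ext y
  constructor
  · intro hy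
    exact ⟨e.symm y, ⟨y, hy, rfl⟩, by simp⟩
  · rintro ⟨x, ⟨z, hz, rfl⟩, rfl⟩
    simpa using hz

theorem equiv_mem_image_iff {s : Set R} {x : R} : e x ∈ e '' s ↔ x ∈ s :=
  e.injective.mem_set_image

end AuxEquiv
noncomputable def om {R : Type*} [Ring R] (t a : R) : R :=
  Classical.epsilon fun a' => t * a = a' * t

noncomputable def sg {R : Type*} [Ring R] (t a : R) : R :=
  Classical.epsilon fun a' => a * t = t * a'

section AuxNormal

variable {R : Type*} [Ring R] {t : R}

/-- All the hypotheses on a normal regular element, packaged. -/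
structure NormalReg (t : R) : Prop where
  no1 : ∀ a : R, ∃ a', a * t = t * a'
  no2 : ∀ a : R, ∃ a', t * a = a' * t
  regl : ∀ x : R, t * x = 0 → x = 0
  regr : ∀ x : R, x * t = 0 → x = 0

theorem NormalReg.om_spec (h : NormalReg t) (a : R) : t * a = om t a * t :=
  Classical.epsilon_spec (h.no2 a)

theorem NormalReg.sg_spec (h : NormalReg t) (a : R) : a * t = t * sg t a :=
  Classical.epsilon_spec (h.no1 a)

theorem NormalReg.om_unique (h : NormalReg t) {a x : R} (hh : t * a = x * t) : x = om t a := by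
  have h2 := h.om_spec a
  have h3 : (x - om t a) * t = 0 := by rw [sub_mul, ← hh, ← h2, sub_self]
  exact sub_eq_zero.mp (h.regr _ h3)

theorem NormalReg.sg_unique (h : NormalReg t) {a x : R} (hh : a * t = t * x) : x = sg t a := by
  have h2 := h.sg_spec a
  have h3 : t * (x - sg t a) = 0 := by rw [mul_sub, ← hh, ← h2, sub_self]
  exact sub_eq_zero.mp (h.regl _ h3)

theorem NormalReg.om_add (h : NormalReg t) (a b : R) : om t (a + b) = om t a + om t b :=
  (h.om_unique (by rw [mul_add, h.om_spec a, h.om_spec b, add_mul])).symm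

theorem NormalReg.om_mul (h : NormalReg t) (a b : R) : om t (a * b) = om t a * om t b :=
  (h.om_unique (by rw [← mul_assoc, h.om_spec a, mul_assoc, h.om_spec b, ← mul_assoc])).symm

theorem NormalReg.sg_add (h : NormalReg t) (a b : R) : sg t (a + b) = sg t a + sg t b :=
  (h.sg_unique (by rw [add_mul, h.sg_spec a, h.sg_spec b, mul_add])).symm

theorem NormalReg.sg_mul (h : NormalReg t) (a b : R) : sg t (a * b) = sg t a * sg t b :=
  (h.sg_unique (by rw [mul_assoc, h.sg_spec b, ← mul_assoc, h.sg_spec a, mul_assoc])).symm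

theorem NormalReg.sg_om (h : NormalReg t) (a : R) : sg t (om t a) = a :=
  (h.sg_unique (h.om_spec a).symm).symm

theorem NormalReg.om_sg (h : NormalReg t) (a : R) : om t (sg t a) = a :=
  (h.om_unique (h.sg_spec a).symm).symm

theorem NormalReg.om_self (h : NormalReg t) : om t t = t := (h.om_unique rfl).symm

theorem NormalReg.sg_self (h : NormalReg t) : sg t t = t := (h.sg_unique rfl).symm

/-- Conjugation by a normal regular element as a ring automorphism (`sg` direction). -/
noncomputable def NormalReg.sgAut (h : NormalReg t) : R ≃+* R where
  toFun := sg t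
  invFun := om t
  left_inv := h.om_sg
  right_inv := h.sg_om
  map_mul' := h.sg_mul
  map_add' := h.sg_add

theorem NormalReg.sgAut_apply (h : NormalReg t) (a : R) : h.sgAut a = sg t a := rfl

theorem NormalReg.sgAut_symm_apply (h : NormalReg t) (a : R) : h.sgAut.symm a = om t a := rfl

theorem NormalReg.cancel_left (h : NormalReg t) {P : Set R} (hP : IsPrimeIdealSet P)
    (htP : t ∉ P) {a : R} (ha : t * a ∈ P) : a ∈ P := by
  set TA : Set R := {x | ∃ z, x = t * z} with hTAdef
  have hTA : IsIdealSet TA := by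
    refine ⟨⟨0, by simp⟩, ?_, ?_, ?_⟩
    · rintro x ⟨z1, rfl⟩ y ⟨z2, rfl⟩
      exact ⟨z1 + z2, by rw [mul_add]⟩
    · rintro x ⟨z, rfl⟩
      exact ⟨-z, by rw [mul_neg]⟩
    · rintro x ⟨z, rfl⟩ r
      constructor
      · refine ⟨sg t r * z, ?_⟩
        rw [← mul_assoc, h.sg_spec r, mul_assoc]
      · exact ⟨z * r, by rw [mul_assoc]⟩
  set B : Set R := {x | ∀ r, t * (r * x) ∈ P} with hBdef
  have hB : IsIdealSet B := by
    refine ⟨?_, ?_, ?_, ?_⟩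
    · intro r; simpa using hP.1.zero'
    · intro x hx y hy r
      have := hP.1.add' (hx r) (hy r)
      simpa [mul_add] using this
    · intro x hx r
      have := hP.1.neg' (hx r)
      simpa [mul_neg] using this
    · intro x hx r'
      constructor
      · intro r
        have := hx (r * r')
        simpa [mul_assoc] using this
      · intro r
        have := hP.1.mulR (hx r) r'
        simpa [mul_assoc] using this
  have haB : a ∈ B := by
    intro r
    have h1 : t * (r * a) = om t r * (t * a) := by
      rw [← mul_assoc, h.om_spec r, mul_assoc]
    rw [h1]
    exact hP.1.mulL ha _
  have hpair : ∀ x ∈ TA, ∀ y ∈ B, x * y ∈ P := by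
    rintro x ⟨z, rfl⟩ y hy
    have := hy z
    simpa [mul_assoc] using this
  rcases hP.2.2 TA B hTA hB hpair with hc | hc
  · exact absurd (hc ⟨1, (mul_one t).symm⟩) htP
  · exact hc haB

theorem NormalReg.cancel_right (h : NormalReg t) {P : Set R} (hP : IsPrimeIdealSet P)
    (htP : t ∉ P) {a : R} (ha : a * t ∈ P) : a ∈ P := by
  set AT : Set R := {x | ∃ z, x = z * t} with hATdef
  have hAT : IsIdealSet AT := by
    refine ⟨⟨0, by simp⟩, ?_, ?_, ?_⟩
    · rintro x ⟨z1, rfl⟩ y ⟨z2, rfl⟩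
      exact ⟨z1 + z2, by rw [add_mul]⟩
    · rintro x ⟨z, rfl⟩
      exact ⟨-z, by rw [neg_mul]⟩
    · rintro x ⟨z, rfl⟩ r
      refine ⟨⟨r * z, by rw [mul_assoc]⟩, ⟨z * om t r, ?_⟩⟩
      rw [mul_assoc, mul_assoc, ← h.om_spec r]
  set B : Set R := {x | ∀ r, (x * r) * t ∈ P} with hBdef
  have hB : IsIdealSet B := by
    refine ⟨?_, ?_, ?_, ?_⟩
    · intro r; simpa using hP.1.zero'
    · intro x hx y hy r
      have := hP.1.add' (hx r) (hy r)
      simpa [add_mul] using this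
    · intro x hx r
      have := hP.1.neg' (hx r)
      simpa [neg_mul] using this
    · intro x hx r'
      constructor
      · intro r
        have := hP.1.mulL (hx r) r'
        simpa [mul_assoc] using this
      · intro r
        have := hx (r' * r)
        simpa [mul_assoc] using this
  have haB : a ∈ B := by
    intro r
    have h1 : (a * r) * t = (a * t) * sg t r := by
      rw [mul_assoc, h.sg_spec r, mul_assoc]
    rw [h1]
    exact hP.1.mulR ha _
  have hpair : ∀ x ∈ B, ∀ y ∈ AT, x * y ∈ P := by
    rintro x hx y ⟨z, rfl⟩
    have := hx z
    simpa [mul_assoc] using this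
  rcases hP.2.2 B AT hB hAT hpair with hc | hc
  · exact hc haB
  · exact absurd (hc ⟨1, (one_mul t).symm⟩) htP

theorem NormalReg.om_mem_prime (h : NormalReg t) {P : Set R} (hP : IsPrimeIdealSet P)
    (htP : t ∉ P) {a : R} (ha : a ∈ P) : om t a ∈ P := by
  apply h.cancel_right hP htP (a := om t a)
  rw [← h.om_spec a]
  exact hP.1.mulL ha t

theorem NormalReg.sg_mem_prime (h : NormalReg t) {P : Set R} (hP : IsPrimeIdealSet P)
    (htP : t ∉ P) {a : R} (ha : a ∈ P) : sg t a ∈ P := by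
  apply h.cancel_left hP htP (a := sg t a)
  rw [← h.sg_spec a]
  exact hP.1.mulR ha t

end AuxNormal
section AuxIter

variable {R : Type*} [Ring R] {t : R}

/-- Iterates of the `sg` automorphism. -/
noncomputable def NormalReg.sgIter (h : NormalReg t) : ℕ → (R ≃+* R)
  | 0 => RingEquiv.refl R
  | (j + 1) => (h.sgIter j).trans h.sgAut

theorem NormalReg.sgIter_zero (h : NormalReg t) (a : R) : h.sgIter 0 a = a := rfl

theorem NormalReg.sgIter_succ (h : NormalReg t) (j : ℕ) (a : R) :
    h.sgIter (j + 1) a = sg t (h.sgIter j a) := rfl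

theorem NormalReg.comm_pow (h : NormalReg t) :
    ∀ (m : ℕ) (a : R), a * t ^ m = t ^ m * h.sgIter m a := by
  intro m
  induction m with
  | zero => intro a; simp [h.sgIter_zero]
  | succ m ih =>
    intro a
    rw [pow_succ, ← mul_assoc, ih a, mul_assoc, h.sg_spec (h.sgIter m a), ← mul_assoc,
      ← pow_succ, h.sgIter_succ]

theorem NormalReg.pow_regl (h : NormalReg t) :
    ∀ (m : ℕ) (x : R), t ^ m * x = 0 → x = 0 := by
  intro m
  induction m with
  | zero => intro x hx; simpa using hx
  | succ m ih =>
    intro x hx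
    rw [pow_succ, mul_assoc] at hx
    exact h.regl x (ih _ hx)

theorem NormalReg.sgIter_fix (h : NormalReg t) : ∀ m : ℕ, h.sgIter m t = t := by
  intro m
  induction m with
  | zero => rfl
  | succ m ih => rw [h.sgIter_succ, ih, h.sg_self]

theorem NormalReg.tprod (h : NormalReg t) :
    ∀ (m : ℕ) (x : Fin m → R),
      (List.ofFn fun i => t * x i).prod =
        t ^ m * (List.ofFn fun i : Fin m => h.sgIter (m - 1 - (i : ℕ)) (x i)).prod := by
  intro m
  induction m with
  | zero => intro x; simp
  | succ m ih =>
    intro x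
    rw [List.ofFn_succ, List.prod_cons]
    have htail := ih (fun i => x i.succ)
    rw [htail]
    rw [List.ofFn_succ (f := fun i : Fin (m+1) => h.sgIter (m + 1 - 1 - (i : ℕ)) (x i)),
      List.prod_cons]
    have he1 : (fun i : Fin m => h.sgIter (m + 1 - 1 - ((i.succ : Fin (m+1)) : ℕ)) (x i.succ))
        = fun i : Fin m => h.sgIter (m - 1 - (i : ℕ)) (x i.succ) := by
      funext i
      have hval : m + 1 - 1 - ((i.succ : Fin (m+1)) : ℕ) = m - 1 - (i : ℕ) := by
        simp only [Fin.val_succ]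
        omega
      rw [hval]
    rw [he1]
    have he0 : (m + 1 - 1 - ((0 : Fin (m+1)) : ℕ)) = m := by simp
    rw [he0]
    rw [← mul_assoc, ← mul_assoc]
    congr 1
    rw [mul_assoc, h.comm_pow m (x 0), ← mul_assoc, ← pow_succ']

end AuxIter

section AuxLoc

variable {A Q : Type*} [Ring A] [Ring Q] {f : A →+* Q} {S : Set A}

theorem mem_locSet {I : Set A} {q : Q} :
    q ∈ locSet f S I ↔ ∃ s ∈ S, ∃ a ∈ I, f s * q = f a := Iff.rfl

theorem locSet_mono {I J : Set A} (hIJ : I ⊆ J) : locSet f S I ⊆ locSet f S J := by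
  rintro q ⟨s, hs, a, ha, heq⟩
  exact ⟨s, hs, a, hIJ ha, heq⟩

theorem locSet_isIdeal (h1 : (1 : A) ∈ S) (hmul : ∀ s ∈ S, ∀ u ∈ S, s * u ∈ S)
    (hnorm : ∀ s ∈ S, ∀ b : A, ∃ b', s * b = b' * s)
    (hsurjQ : ∀ q : Q, ∃ s ∈ S, ∃ b : A, f s * q = f b)
    {I : Set A} (hI : IsIdealSet I)
    (hswap : ∀ s ∈ S, ∀ a ∈ I, ∃ a' ∈ I, s * a = a' * s) :
    IsIdealSet (locSet f S I) := by
  refine ⟨⟨1, h1, 0, hI.zero', by simp⟩, ?_, ?_, ?_⟩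
  · rintro q1 ⟨s1, hs1, a1, ha1, he1⟩ q2 ⟨s2, hs2, a2, ha2, he2⟩
    obtain ⟨b', hb'⟩ := hnorm s2 hs2 s1
    refine ⟨s2 * s1, hmul _ hs2 _ hs1, s2 * a1 + b' * a2, hI.add' (hI.mulL ha1 s2) (hI.mulL ha2 b'), ?_⟩
    rw [mul_add, map_add]
    congr 1
    · rw [map_mul, mul_assoc, he1, ← map_mul]
    · rw [hb', map_mul, mul_assoc, he2, ← map_mul]
  · rintro q ⟨s, hs, a, ha, he⟩
    exact ⟨s, hs, -a, hI.neg' ha, by rw [mul_neg, he, map_neg]⟩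
  · rintro q ⟨s, hs, a, ha, he⟩ r
    constructor
    · obtain ⟨u, hu, b, hb⟩ := hsurjQ r
      obtain ⟨b'', hb''⟩ := hnorm s hs b
      refine ⟨s * u, hmul _ hs _ hu, b'' * a, hI.mulL ha b'', ?_⟩
      rw [map_mul, mul_assoc, ← mul_assoc (f u) r q, hb, ← mul_assoc (f s) (f b) q, ← map_mul,
        hb'', map_mul, mul_assoc, he, ← map_mul]
    · obtain ⟨u, hu, b, hb⟩ := hsurjQ r
      obtain ⟨a', ha', hswapeq⟩ := hswap u hu a ha
      refine ⟨u * s, hmul _ hu _ hs, a' * b, hI.mulR ha' b, ?_⟩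
      rw [map_mul, mul_assoc, ← mul_assoc (f s) q r, he, ← mul_assoc, ← map_mul, hswapeq,
        map_mul, mul_assoc, hb, ← map_mul]

theorem prodRep (h1 : (1 : A) ∈ S) (hmul : ∀ s ∈ S, ∀ u ∈ S, s * u ∈ S) :
    ∀ (m : ℕ) (I : Fin m → Set A)
      (_ : ∀ j, ∀ u ∈ S, ∀ a ∈ I j, ∃ a' ∈ I j, u * a = a' * u)
      (q : Fin m → Q) (_ : ∀ j, ∃ s ∈ S, ∃ a ∈ I j, f s * q j = f a),
      ∃ s ∈ S, ∃ a : Fin m → A, (∀ j, a j ∈ I j) ∧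
        f s * (List.ofFn q).prod = f ((List.ofFn a).prod) := by
  intro m
  induction m with
  | zero =>
    intro I hswap q hq
    exact ⟨1, h1, Fin.elim0, fun j => j.elim0, by simp⟩
  | succ m ih =>
    intro I hswap q hq
    obtain ⟨s0, hs0, a0, ha0, he0⟩ := hq 0
    obtain ⟨st, hst, av, hav, het⟩ := ih (fun j => I j.succ)
      (fun j => hswap j.succ) (fun j => q j.succ) (fun j => hq j.succ)
    obtain ⟨a0', ha0', hsw⟩ := hswap 0 st hst a0 ha0
    refine ⟨st * s0, hmul _ hst _ hs0, Fin.cons a0' av, ?_, ?_⟩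
    · intro j
      refine Fin.cases ?_ ?_ j
      · simpa using ha0'
      · intro i; simpa using hav i
    · rw [List.ofFn_succ, List.prod_cons, List.ofFn_succ (f := Fin.cons a0' av), List.prod_cons]
      simp only [Fin.cons_zero, Fin.cons_succ]
      rw [map_mul, mul_assoc, ← mul_assoc (f s0) (q 0) _, he0, map_mul, ← mul_assoc, ← map_mul,
        hsw, map_mul, mul_assoc, het, ← map_mul]

end AuxLoc
universe u v w

/-- In the setting of Statement 9, assume moreover that the
prime radical `𝔫_{R̄}` of `R̄` is a nilpotent ideal.  Then:
(1) `𝔭 ↦ S̄⁻¹π(𝔭)` is a bijection of `min(𝔞)` onto `min(S̄⁻¹R̄)`, i.e.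
`min(R⟨S⁻¹⟩) = { S̄⁻¹π(𝔭) | 𝔭 ∈ min(𝔞) }`; (2) `S̄⁻¹𝔫_{R̄} = 𝔫_{S̄⁻¹R̄}`
and `S̄⁻¹R̄ / S̄⁻¹𝔫_{R̄} ≅ S̄⁻¹R̄ / 𝔫_{S̄⁻¹R̄} ≅ S̃⁻¹R̃`, where `S̃`, the
image of `S̄` in `R̃ = R̄/𝔫_{R̄}`, is a (left and right) denominator set of
`R̃` with zero assassinator. -/
theorem statement10 {R : Type*} [Ring R]
    {S : Set R} (hSmul : IsMulSet S) (hnormal : ∀ s ∈ S, IsNormalElement s)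
    (hfin : {p : Set R | IsMinimalPrimeOver (twoSidedAss S) p}.Finite)
    (A : Type u) [Ring A] (g : R →+* A) (hg : Function.Surjective g)
    (hgker : ∀ r : R, g r = 0 ↔ r ∈ twoSidedAss S)
    (hden : IsLeftDenominatorSet (g '' S) ∧ IsRightDenominatorSet (g '' S) ∧
      lAss (g '' S) = ({0} : Set A))
    (hnil : ∃ k : ℕ, 1 ≤ k ∧ ∀ x : Fin k → A,
      (∀ i, x i ∈ primeRadicalSet A) → (List.ofFn x).prod = 0)
    {Q : Type*} [Ring Q] (f : A →+* Q) (hf : IsLeftLocalization (g '' S) f) :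
    (minPrimes Q =
        (fun p : Set R => locSet f (g '' S) (g '' p)) ''
          {p : Set R | IsMinimalPrimeOver (twoSidedAss S) p} ∧
      Set.InjOn (fun p : Set R => locSet f (g '' S) (g '' p))
        {p : Set R | IsMinimalPrimeOver (twoSidedAss S) p}) ∧
    locSet f (g '' S) (primeRadicalSet A) = primeRadicalSet Q ∧
    ∀ (B : Type v) [Ring B],
      ∀ h : A →+* B, Function.Surjective h →
        (∀ a : A, h a = 0 ↔ a ∈ primeRadicalSet A) →
        (IsLeftDenominatorSet (h '' (g '' S)) ∧
          IsRightDenominatorSet (h '' (g '' S)) ∧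
          lAss (h '' (g '' S)) = ({0} : Set B)) ∧
        ∀ (Q' : Type w) [Ring Q'],
          ∀ f' : B →+* Q', IsLeftLocalization (h '' (g '' S)) f' →
            ∃ φ : Q →+* Q', Function.Surjective φ ∧
              (∀ q : Q, φ q = 0 ↔ q ∈ primeRadicalSet Q) ∧
              ∀ a : A, φ (f a) = f' (h a) := by
  obtain ⟨hLD, hRD, hAss⟩ := hden
  obtain ⟨k, hk1, hknil⟩ := hnil
  obtain ⟨k0, rfl⟩ : ∃ k0, k = k0 + 1 := ⟨k - 1, by omega⟩
  set Sb : Set A := g '' S with hSbdef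
  have h1S : (1 : A) ∈ Sb := ⟨1, hSmul.1, map_one g⟩
  have h0S : (0 : A) ∉ Sb := hLD.1.2.1
  have hmulS : ∀ s ∈ Sb, ∀ u ∈ Sb, s * u ∈ Sb := hLD.1.2.2
  have hA1 : (1 : A) ≠ 0 := fun hc => h0S (hc ▸ h1S)
  have hNR : ∀ t ∈ Sb, NormalReg t := by
    intro t ht
    obtain ⟨s, hsS, rfl⟩ := ht
    have hn := image_normal hg (hnormal s hsS)
    refine ⟨hn.1, hn.2, ?_, ?_⟩
    · intro x hx
      have hmem : x ∈ lAss Sb := ⟨g s, ⟨s, hsS, rfl⟩, hx⟩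
      rw [hAss] at hmem
      exact hmem
    · intro x hx
      obtain ⟨u, huS, hux⟩ := hLD.2.2 x (g s) ⟨s, hsS, rfl⟩ hx
      have hmem : x ∈ lAss Sb := ⟨u, huS, hux⟩
      rw [hAss] at hmem
      exact hmem
  have finj : Function.Injective f := by
    intro a b hab
    have h0 : f (a - b) = 0 := by rw [map_sub, hab, sub_self]
    have hmem := (hf.ker _).mp h0
    rw [hAss] at hmem
    have : a - b = 0 := hmem
    exact sub_eq_zero.mp this
  -- correspondence between minimal primes of A and primes minimal over the assassinator
  have hcorr : minPrimes A =
      (fun p : Set R => g '' p) '' {p : Set R | IsMinimalPrimeOver (twoSidedAss S) p} := by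
    ext q
    constructor
    · intro hq
      have hkerq : ∀ r : R, g r = 0 → r ∈ g ⁻¹' q := by
        intro r hr
        show g r ∈ q
        rw [hr]
        exact hq.1.1.zero'
      have hassq : twoSidedAss S ⊆ g ⁻¹' q := fun r hr => hkerq r ((hgker r).mpr hr)
      have hpre : IsPrimeIdealSet (g ⁻¹' q) := preimage_isPrime hg hq.1
      refine ⟨g ⁻¹' q, ⟨hpre, hassq, ?_⟩, image_preimage_hom hg q⟩
      intro P' hP' hassP' hsub
      have hkerP' : ∀ r : R, g r = 0 → r ∈ P' := fun r hr => hassP' ((hgker r).mp hr)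
      have himg : IsPrimeIdealSet (g '' P') := image_isPrime hg hP' hkerP'
      have hsub2 : g '' P' ⊆ q := by
        intro x hx
        obtain ⟨r, hr, rfl⟩ := hx
        exact hsub hr
      have heq := hq.2 _ himg hsub2
      rw [← preimage_image_hom hP'.1 hkerP', heq]
    · rintro ⟨p, hp, rfl⟩
      have hkerp : ∀ r : R, g r = 0 → r ∈ p := fun r hr => hp.2.1 ((hgker r).mp hr)
      refine ⟨image_isPrime hg hp.1 hkerp, ?_⟩
      intro P' hP' hsub
      have hpreP' : IsPrimeIdealSet (g ⁻¹' P') := preimage_isPrime hg hP'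
      have hassP' : twoSidedAss S ⊆ g ⁻¹' P' := by
        intro r hr
        show g r ∈ P'
        rw [(hgker r).mpr hr]
        exact hP'.1.zero'
      have hsubp : g ⁻¹' P' ⊆ p := by
        intro r hr
        have hmem : r ∈ g ⁻¹' (g '' p) := hsub hr
        rwa [preimage_image_hom hp.1.1 hkerp] at hmem
      have heq := hp.2.2 _ hpreP' hassP' hsubp
      rw [← heq]
      exact (image_preimage_hom hg P').symm
  have hminfin : (minPrimes A).Finite := by
    rw [hcorr]
    exact hfin.image _
  have hminne : (minPrimes A).Nonempty := by
    obtain ⟨P, hP⟩ := exists_prime_ideal hA1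
    obtain ⟨p, hpmin, -⟩ := exists_minimal_prime_subset hP
    exact ⟨p, hpmin⟩
  -- minimal primes avoid Sb
  have hdisj : ∀ p ∈ minPrimes A, ∀ t ∈ Sb, t ∉ p := by
    intro p0 hp0 t ht htp0
    have hNRt := hNR t ht
    set E : Set (Set A) := {q ∈ minPrimes A | t ∉ q} with hEdef
    set I : Set A := ⋂₀ E with hIdef
    have hIideal : IsIdealSet I := isIdealSet_sInter (fun q hq => hq.1.1.1)
    have hItN : ∀ x ∈ I, t * x ∈ primeRadicalSet A := by
      intro x hx
      rw [mem_primeRadical_iff_minimal]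
      intro q hq
      by_cases hqD : t ∈ q
      · exact hq.1.1.mulR hqD x
      · exact hq.1.1.mulL (hx q ⟨hq, hqD⟩) t
    have hnotsub : ∀ p' ∈ minPrimes A, t ∈ p' → ¬ (I ⊆ p') := by
      intro p' hp' htp' hIp'
      by_cases hE : E.Nonempty
      · obtain ⟨m, v, hv⟩ := (hminfin.subset (fun q hq => hq.1)).fin_embedding (s := E)
        rcases m with - | m0
        · obtain ⟨q, hq⟩ := hE
          rw [← hv] at hq
          obtain ⟨i, -⟩ := hq
          exact i.elim0
        · have hprod : ∀ x : Fin (m0 + 1) → A, (∀ i, x i ∈ v i) →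
              (List.ofFn x).prod ∈ p' := by
            intro x hx
            apply hIp'
            intro q hq
            rw [← hv] at hq
            obtain ⟨j, rfl⟩ := hq
            exact listProd_mem (by
              have : v j ∈ E := by rw [← hv]; exact ⟨j, rfl⟩
              exact this.1.1.1) _ ⟨x j, List.mem_ofFn.mpr ⟨j, rfl⟩, hx j⟩
          obtain ⟨i, hi⟩ := prime_prod hp'.1 m0 (fun i => v i)
            (fun i => (show v i ∈ E by rw [← hv]; exact ⟨i, rfl⟩).1.1.1) hprod
          have hviE : v i ∈ E := by rw [← hv]; exact ⟨i, rfl⟩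
          have : v i = p' := hp'.2 _ hviE.1.1 hi
          exact hviE.2 (this ▸ htp')
      · have hIuniv : I = Set.univ := by
          rw [hIdef, Set.not_nonempty_iff_eq_empty.mp hE, Set.sInter_empty]
        rw [hIuniv] at hIp'
        exact one_not_mem_of_prime hp'.1 (hIp' trivial)
    have hzero : ∀ x : Fin (k0 + 1) → A, (∀ i, x i ∈ I) →
        (List.ofFn fun i => hNRt.sgIter (k0 + 1 - 1 - (i : ℕ)) (x i)).prod = 0 := by
      intro x hx
      have h0 : (List.ofFn fun i => t * x i).prod = 0 := hknil _ (fun i => hItN _ (hx i))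
      rw [hNRt.tprod (k0 + 1) x] at h0
      exact hNRt.pow_regl (k0 + 1) _ h0
    have hhyp : ∀ y : Fin (k0 + 1) → A,
        (∀ i : Fin (k0 + 1), y i ∈ (hNRt.sgIter (k0 + 1 - 1 - (i : ℕ))) '' I) →
        (List.ofFn y).prod ∈ p0 := by
      intro y hy
      have hxmem : ∀ i : Fin (k0 + 1), (hNRt.sgIter (k0 + 1 - 1 - (i : ℕ))).symm (y i) ∈ I := by
        intro i
        obtain ⟨w, hw, hwy⟩ := hy i
        rw [← hwy, RingEquiv.symm_apply_apply]
        exact hw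
      have := hzero (fun i => (hNRt.sgIter (k0 + 1 - 1 - (i : ℕ))).symm (y i)) hxmem
      have heq : (List.ofFn fun i =>
          hNRt.sgIter (k0 + 1 - 1 - (i : ℕ))
            ((hNRt.sgIter (k0 + 1 - 1 - (i : ℕ))).symm (y i))) = List.ofFn y := by
        congr 1
        funext i
        rw [RingEquiv.apply_symm_apply]
      rw [heq] at this
      rw [this]
      exact hp0.1.1.zero'
    obtain ⟨i, hi⟩ := prime_prod hp0.1 k0
      (fun i => (hNRt.sgIter (k0 + 1 - 1 - (i : ℕ))) '' I)
      (fun i => equiv_image_isIdeal _ hIideal) hhyp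
    set j := k0 + 1 - 1 - (i : ℕ) with hjdef
    have hIsub : I ⊆ (hNRt.sgIter j).symm '' p0 := by
      intro x hx
      exact ⟨hNRt.sgIter j x, hi ⟨x, hx, rfl⟩, RingEquiv.symm_apply_apply _ _⟩
    have hp' : IsMinimalPrimeIdealSet ((hNRt.sgIter j).symm '' p0) :=
      equiv_image_isMinimalPrime _ hp0
    have htp' : t ∈ (hNRt.sgIter j).symm '' p0 := by
      refine ⟨t, htp0, ?_⟩
      have hfix : (hNRt.sgIter j).symm ((hNRt.sgIter j) t) = t := RingEquiv.symm_apply_apply _ _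
      rw [hNRt.sgIter_fix j] at hfix
      exact hfix
    exact hnotsub _ hp' htp' hIsub
  -- cancellation facts
  have hcanL : ∀ p ∈ minPrimes A, ∀ t ∈ Sb, ∀ a : A, t * a ∈ p → a ∈ p :=
    fun p hp t ht a ha => (hNR t ht).cancel_left hp.1 (hdisj p hp t ht) ha
  have hcanR : ∀ p ∈ minPrimes A, ∀ t ∈ Sb, ∀ a : A, a * t ∈ p → a ∈ p :=
    fun p hp t ht a ha => (hNR t ht).cancel_right hp.1 (hdisj p hp t ht) ha
  have homp : ∀ p ∈ minPrimes A, ∀ t ∈ Sb, ∀ a ∈ p, om t a ∈ p :=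
    fun p hp t ht a ha => (hNR t ht).om_mem_prime hp.1 (hdisj p hp t ht) ha
  have hNom : ∀ t ∈ Sb, ∀ a ∈ primeRadicalSet A, om t a ∈ primeRadicalSet A := by
    intro t ht a ha
    rw [mem_primeRadical_iff_minimal] at ha ⊢
    intro p hp
    exact homp p hp t ht a (ha p hp)
  have hcanLN : ∀ t ∈ Sb, ∀ a : A, t * a ∈ primeRadicalSet A → a ∈ primeRadicalSet A := by
    intro t ht a ha
    rw [mem_primeRadical_iff_minimal] at ha ⊢
    intro p hp
    exact hcanL p hp t ht a (ha p hp)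
  have hcanRN : ∀ t ∈ Sb, ∀ a : A, a * t ∈ primeRadicalSet A → a ∈ primeRadicalSet A := by
    intro t ht a ha
    rw [mem_primeRadical_iff_minimal] at ha ⊢
    intro p hp
    exact hcanR p hp t ht a (ha p hp)
  have hnorm2 : ∀ s ∈ Sb, ∀ b : A, ∃ b', s * b = b' * s := fun s hs => (hNR s hs).no2
  -- the extension of the prime radical and of the minimal primes
  have hNilocIdeal : IsIdealSet (locSet f Sb (primeRadicalSet A)) :=
    locSet_isIdeal h1S hmulS hnorm2 hf.surj isIdealSet_primeRadical
      (fun s hs a ha => ⟨om s a, hNom s hs a ha, (hNR s hs).om_spec a⟩)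
  have hpli : ∀ p ∈ minPrimes A, IsIdealSet (locSet f Sb p) := fun p hp =>
    locSet_isIdeal h1S hmulS hnorm2 hf.surj hp.1.1
      (fun s hs a ha => ⟨om s a, homp p hp s hs a ha, (hNR s hs).om_spec a⟩)
  have hext : ∀ J : Set Q, IsIdealSet J → locSet f Sb (f ⁻¹' J) = J := by
    intro J hJ
    ext q
    constructor
    · rintro ⟨s, hs, a, ha, he⟩
      obtain ⟨u, hu⟩ := hf.isUnit s hs
      have hq : q = ↑u⁻¹ * (f s * q) := by rw [← hu, Units.inv_mul_cancel_left]
      rw [hq, he]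
      exact hJ.mulL ha _
    · intro hq
      obtain ⟨s, hs, a, he⟩ := hf.surj q
      have haJ : f a ∈ J := by rw [← he]; exact hJ.mulL hq (f s)
      exact ⟨s, hs, a, haJ, he⟩
  have hmemE : ∀ p ∈ minPrimes A, ∀ a : A, f a ∈ locSet f Sb p ↔ a ∈ p := by
    intro p hp a
    constructor
    · rintro ⟨s, hs, b, hb, he⟩
      rw [← map_mul] at he
      have hsab : s * a = b := finj he
      exact hcanL p hp s hs a (hsab ▸ hb)
    · intro ha
      exact ⟨1, h1S, a, ha, by rw [map_one, one_mul]⟩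
  have hconE : ∀ p ∈ minPrimes A, f ⁻¹' (locSet f Sb p) = p := by
    intro p hp
    ext a
    exact hmemE p hp a
  have hEprime : ∀ p ∈ minPrimes A, IsPrimeIdealSet (locSet f Sb p) := by
    intro p hp
    refine ⟨hpli p hp, ?_, ?_⟩
    · intro hc
      have h1 : (1 : Q) ∈ locSet f Sb p := hc ▸ trivial
      obtain ⟨s, hs, a, ha, he⟩ := h1
      rw [mul_one] at he
      have : s = a := finj he
      exact hdisj p hp s hs (this ▸ ha)
    · intro X Y hX hY hXY
      have hpair : ∀ a ∈ f ⁻¹' X, ∀ b ∈ f ⁻¹' Y, a * b ∈ p := by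
        intro a ha b hb
        have hmem : f (a * b) ∈ locSet f Sb p := by
          rw [map_mul]
          exact hXY _ ha _ hb
        exact (hmemE p hp _).mp hmem
      rcases hp.1.2.2 _ _ (preimage_isIdeal hX) (preimage_isIdeal hY) hpair with hc | hc
      · left
        rw [← hext X hX]
        exact locSet_mono hc
      · right
        rw [← hext Y hY]
        exact locSet_mono hc
  -- nilpotency of the extended prime radical
  have hprodN : ∀ x : Fin (k0 + 1) → Q,
      (∀ i, x i ∈ locSet f Sb (primeRadicalSet A)) → (List.ofFn x).prod = 0 := by
    intro x hx
    obtain ⟨s, hs, a, haj, he⟩ := prodRep h1S hmulS (k0 + 1) (fun _ => primeRadicalSet A)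
      (fun j u hu b hb => ⟨om u b, hNom u hu b hb, (hNR u hu).om_spec b⟩) x hx
    rw [hknil a haj, map_zero] at he
    exact ((hf.isUnit s hs).mul_right_eq_zero).mp he
  have heNsub : ∀ J : Set Q, IsPrimeIdealSet J → locSet f Sb (primeRadicalSet A) ⊆ J := by
    intro J hJ
    obtain ⟨i, hi⟩ := prime_prod hJ k0 (fun _ => locSet f Sb (primeRadicalSet A))
      (fun _ => hNilocIdeal) (fun x hx => by rw [hprodN x hx]; exact hJ.1.zero')
    exact hi
  -- enumeration of the minimal primes
  obtain ⟨n, v, hv⟩ := hminfin.fin_embedding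
  have hvmem : ∀ i, v i ∈ minPrimes A := fun i => hv ▸ ⟨i, rfl⟩
  have hinterv : ∀ a : A, (∀ i, a ∈ v i) → a ∈ primeRadicalSet A := by
    intro a ha
    rw [mem_primeRadical_iff_minimal]
    intro p hp
    have hpv : p ∈ Set.range v := by rw [hv]; exact hp
    obtain ⟨i, rfl⟩ := hpv
    exact ha i
  rcases n with - | n0
  · exfalso
    obtain ⟨p, hp⟩ := hminne
    have hpv : p ∈ Set.range v := by rw [hv]; exact hp
    obtain ⟨i, -⟩ := hpv
    exact i.elim0
  have hblock : ∀ x : Fin (n0 + 1) → Q, (∀ i, x i ∈ locSet f Sb (v i)) →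
      (List.ofFn x).prod ∈ locSet f Sb (primeRadicalSet A) := by
    intro x hx
    obtain ⟨s, hs, a, haj, he⟩ := prodRep h1S hmulS (n0 + 1) (fun i => v i)
      (fun j u hu b hb => ⟨om u b, homp _ (hvmem j) u hu b hb, (hNR u hu).om_spec b⟩) x hx
    refine ⟨s, hs, (List.ofFn a).prod, ?_, he⟩
    rw [mem_primeRadical_iff_minimal]
    intro p hp
    have hpv : p ∈ Set.range v := by rw [hv]; exact hp
    obtain ⟨i, rfl⟩ := hpv
    exact listProd_mem (hvmem i).1.1 _ ⟨a i, List.mem_ofFn.mpr ⟨i, rfl⟩, haj i⟩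
  have hsomeE : ∀ J : Set Q, IsPrimeIdealSet J → ∃ i : Fin (n0 + 1), locSet f Sb (v i) ⊆ J := by
    intro J hJ
    exact prime_prod hJ n0 (fun i => locSet f Sb (v i)) (fun i => hpli _ (hvmem i))
      (fun x hx => heNsub J hJ (hblock x hx))
  -- min(Q) = extensions of minimal primes of A
  have hminQA : minPrimes Q = (fun p : Set A => locSet f Sb p) '' minPrimes A := by
    ext J
    simp only [Set.mem_image]
    constructor
    · intro hJ
      obtain ⟨i, hi⟩ := hsomeE J hJ.1
      exact ⟨v i, hvmem i, hJ.2 _ (hEprime _ (hvmem i)) hi⟩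
    · rintro ⟨p, hp, rfl⟩
      refine ⟨hEprime p hp, ?_⟩
      intro J' hJ' hsub
      obtain ⟨i, hi⟩ := hsomeE J' hJ'
      have hvi_p : v i ⊆ p := by
        intro a ha
        have hmem : f a ∈ locSet f Sb p := hsub (hi ((hmemE _ (hvmem i) a).mpr ha))
        exact (hmemE p hp a).mp hmem
      have hvip : v i = p := hp.2 _ (hvmem i).1 hvi_p
      exact Set.Subset.antisymm hsub (hvip ▸ hi)
  -- part (2)
  have hQrad : locSet f Sb (primeRadicalSet A) = primeRadicalSet Q := by
    apply Set.Subset.antisymm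
    · intro q hq P hP
      exact heNsub P hP hq
    · intro q hq
      have hqv : ∀ i : Fin (n0 + 1), q ∈ locSet f Sb (v i) :=
        fun i => hq _ (hEprime _ (hvmem i))
      have hacc : ∀ m : ℕ, ∃ s ∈ Sb, ∃ a : A, f s * q = f a ∧
          ∀ i : Fin (n0 + 1), (i : ℕ) < m → a ∈ v i := by
        intro m
        induction m with
        | zero =>
          obtain ⟨s, hs, a, he⟩ := hf.surj q
          exact ⟨s, hs, a, he, fun i hi => absurd hi (by omega)⟩
        | succ m ih =>
          obtain ⟨s, hs, a, he, hmem⟩ := ih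
          by_cases hm : m < n0 + 1
          · obtain ⟨tS, htS, b, hb, hebt⟩ := hqv ⟨m, hm⟩
            refine ⟨tS * s, hmulS _ htS _ hs, tS * a, ?_, ?_⟩
            · rw [map_mul, mul_assoc, he, ← map_mul]
            · intro i hi
              have hcross : tS * a = om tS s * b := by
                apply finj
                rw [map_mul, map_mul]
                calc f tS * f a = f tS * (f s * q) := by rw [he]
                  _ = f tS * f s * q := by rw [mul_assoc]
                  _ = f (tS * s) * q := by rw [map_mul]
                  _ = f (om tS s * tS) * q := by rw [← (hNR tS htS).om_spec s]
                  _ = f (om tS s) * (f tS * q) := by rw [map_mul, mul_assoc]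
                  _ = f (om tS s) * f b := by rw [hebt]
              rcases Nat.lt_succ_iff_lt_or_eq.mp hi with hlt | heq
              · exact (hvmem i).1.1.mulL (hmem i hlt) tS
              · have hi_eq : i = ⟨m, hm⟩ := Fin.ext heq
                rw [hi_eq, hcross]
                exact (hvmem _).1.1.mulL hb _
          · exact ⟨s, hs, a, he, fun i hi => hmem i (by omega)⟩
      obtain ⟨s, hs, a, he, hmem⟩ := hacc (n0 + 1)
      exact ⟨s, hs, a, hinterv a (fun i => hmem i i.isLt), he⟩
  refine ⟨⟨?_, ?_⟩, hQrad, ?_⟩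
  · -- (1): description of min(Q)
    rw [hminQA, hcorr, Set.image_image]
  · -- (1): injectivity
    intro p1 hp1 p2 hp2 heq
    simp only at heq
    have h1 : g '' p1 ∈ minPrimes A := by rw [hcorr]; exact ⟨p1, hp1, rfl⟩
    have h2 : g '' p2 ∈ minPrimes A := by rw [hcorr]; exact ⟨p2, hp2, rfl⟩
    have himg : g '' p1 = g '' p2 := by
      rw [← hconE _ h1, ← hconE _ h2, heq]
    have hker1 : ∀ r : R, g r = 0 → r ∈ p1 := fun r hr => hp1.2.1 ((hgker r).mp hr)
    have hker2 : ∀ r : R, g r = 0 → r ∈ p2 := fun r hr => hp2.2.1 ((hgker r).mp hr)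
    rw [← preimage_image_hom hp1.1.1 hker1, ← preimage_image_hom hp2.1.1 hker2, himg]
  · -- (3)
    intro B _instB h hsurj hker
    have hS1B : (1 : B) ∈ h '' Sb := ⟨1, h1S, map_one h⟩
    have hlassB : lAss (h '' Sb) = ({0} : Set B) := by
      ext x
      simp only [Set.mem_singleton_iff]
      constructor
      · rintro ⟨-, ⟨tA, htA, rfl⟩, hux⟩
        obtain ⟨a, rfl⟩ := hsurj x
        rw [← map_mul] at hux
        have htaN : tA * a ∈ primeRadicalSet A := (hker _).mp hux
        exact (hker a).mpr (hcanLN tA htA a htaN)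
      · rintro rfl
        exact ⟨1, hS1B, mul_zero 1⟩
    have hnormB : ∀ u ∈ h '' Sb,
        (∀ b : B, ∃ b', b * u = u * b') ∧ (∀ b : B, ∃ b', u * b = b' * u) := by
      rintro u ⟨tA, htA, rfl⟩
      have hnA : IsNormalElement tA := ⟨(hNR tA htA).no1, (hNR tA htA).no2⟩
      have := image_normal hsurj hnA
      exact ⟨this.1, this.2⟩
    have hmulB : IsMulSet (h '' Sb) := by
      refine ⟨hS1B, ?_, ?_⟩
      · rintro ⟨tA, htA, htA0⟩
        have htaN : tA ∈ primeRadicalSet A := (hker _).mp htA0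
        obtain ⟨p, hp⟩ := hminne
        exact hdisj p hp tA htA (htaN p hp.1)
      · rintro s ⟨tA, htA, rfl⟩ u ⟨tB, htB, rfl⟩
        exact ⟨tA * tB, hmulS _ htA _ htB, map_mul h tA tB⟩
    have hLDB : IsLeftDenominatorSet (h '' Sb) := by
      refine ⟨hmulB, ?_, ?_⟩
      · intro r u hu
        obtain ⟨r', hr'⟩ := (hnormB u hu).2 r
        exact ⟨u, hu, r', hr'⟩
      · rintro r u hu hru
        obtain ⟨a, rfl⟩ := hsurj r
        obtain ⟨tA, htA, rfl⟩ := hu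
        rw [← map_mul] at hru
        have : a * tA ∈ primeRadicalSet A := (hker _).mp hru
        have haN : a ∈ primeRadicalSet A := hcanRN tA htA a this
        exact ⟨1, hS1B, by rw [one_mul]; exact (hker a).mpr haN⟩
    have hRDB : IsRightDenominatorSet (h '' Sb) := by
      refine ⟨hmulB, ?_, ?_⟩
      · intro r u hu
        obtain ⟨r', hr'⟩ := (hnormB u hu).1 r
        exact ⟨u, hu, r', hr'⟩
      · rintro r u hu hru
        obtain ⟨a, rfl⟩ := hsurj r
        obtain ⟨tA, htA, rfl⟩ := hu
        rw [← map_mul] at hru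
        have : tA * a ∈ primeRadicalSet A := (hker _).mp hru
        have haN : a ∈ primeRadicalSet A := hcanLN tA htA a this
        exact ⟨1, hS1B, by rw [mul_one]; exact (hker a).mpr haN⟩
    refine ⟨⟨hLDB, hRDB, hlassB⟩, ?_⟩
    intro Q' _instQ' f' hf'
    choose sx hsx ax hax using hf.surj
    have huf' : ∀ tA ∈ Sb, IsUnit (f' (h tA)) := fun tA ht => hf'.isUnit _ ⟨tA, ht, rfl⟩
    set φ0 : Q → Q' := fun q => ↑(huf' (sx q) (hsx q)).unit⁻¹ * f' (h (ax q)) with hφ0def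
    have hcrossrep : ∀ (q : Q) (s a : A), s ∈ Sb → f s * q = f a →
        s * ax q = om s (sx q) * a := by
      intro q s a hs he
      apply finj
      rw [map_mul, map_mul]
      calc f s * f (ax q) = f s * (f (sx q) * q) := by rw [hax q]
        _ = f s * f (sx q) * q := by rw [mul_assoc]
        _ = f (s * sx q) * q := by rw [map_mul]
        _ = f (om s (sx q) * s) * q := by rw [← (hNR s hs).om_spec (sx q)]
        _ = f (om s (sx q)) * (f s * q) := by rw [map_mul, mul_assoc]
        _ = f (om s (sx q)) * f a := by rw [he]
    have hval : ∀ (q : Q) (s a : A) (hs : s ∈ Sb), f s * q = f a →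
        f' (h s) * φ0 q = f' (h a) := by
      intro q s a hs he
      have hcross := hcrossrep q s a hs he
      have hU : IsUnit (f' (h (om s (sx q)))) := by
        have hunit2 : IsUnit (f' (h (s * sx q))) := huf' _ (hmulS s hs _ (hsx q))
        have hxeq : f' (h (om s (sx q))) = ↑hunit2.unit * ↑(huf' s hs).unit⁻¹ := by
          have hmm : f' (h (om s (sx q))) * f' (h s) = f' (h (s * sx q)) := by
            rw [← map_mul, ← map_mul, ← (hNR s hs).om_spec (sx q)]
          calc f' (h (om s (sx q)))
              = f' (h (om s (sx q))) * (↑(huf' s hs).unit * ↑(huf' s hs).unit⁻¹) := by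
                rw [Units.mul_inv, mul_one]
            _ = (f' (h (om s (sx q))) * f' (h s)) * ↑(huf' s hs).unit⁻¹ := by
                rw [(huf' s hs).unit_spec, mul_assoc]
            _ = f' (h (s * sx q)) * ↑(huf' s hs).unit⁻¹ := by rw [hmm]
            _ = ↑hunit2.unit * ↑(huf' s hs).unit⁻¹ := by rw [hunit2.unit_spec]
        rw [hxeq]
        exact (hunit2.unit * (huf' s hs).unit⁻¹).isUnit
      apply hU.mul_left_cancel
      have hstep : f' (h (sx q)) * φ0 q = f' (h (ax q)) :=
        isUnit_mul_inv_cancel_left (huf' (sx q) (hsx q)) (f' (h (ax q)))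
      calc f' (h (om s (sx q))) * (f' (h s) * φ0 q)
          = f' (h (om s (sx q) * s)) * φ0 q := by rw [map_mul, map_mul, mul_assoc]
        _ = f' (h (s * sx q)) * φ0 q := by rw [← (hNR s hs).om_spec (sx q)]
        _ = f' (h s) * (f' (h (sx q)) * φ0 q) := by rw [map_mul, map_mul, mul_assoc]
        _ = f' (h s) * f' (h (ax q)) := by rw [hstep]
        _ = f' (h (s * ax q)) := by rw [map_mul, map_mul]
        _ = f' (h (om s (sx q) * a)) := by rw [hcross]
        _ = f' (h (om s (sx q))) * f' (h a) := by rw [map_mul, map_mul]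
    have hone : φ0 1 = 1 := by
      have h1 := hval 1 1 1 h1S (by rw [map_one, mul_one])
      rwa [map_one, map_one, one_mul] at h1
    have hzeroφ : φ0 0 = 0 := by
      have h1 := hval 0 1 0 h1S (by rw [map_zero, mul_zero])
      rwa [map_one, map_one, one_mul, map_zero, map_zero] at h1
    have hmulφ : ∀ q1 q2 : Q, φ0 (q1 * q2) = φ0 q1 * φ0 q2 := by
      intro q1 q2
      have hu12 : (sx q2) * (sx q1) ∈ Sb := hmulS _ (hsx q2) _ (hsx q1)
      have e1 : f (sx q2 * sx q1) * (q1 * q2) = f (om (sx q2) (ax q1) * ax q2) := by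
        calc f (sx q2 * sx q1) * (q1 * q2)
            = f (sx q2) * (f (sx q1) * q1) * q2 := by rw [map_mul, mul_assoc, ← mul_assoc (f (sx q1)) q1 q2, ← mul_assoc]
          _ = f (sx q2) * f (ax q1) * q2 := by rw [hax q1]
          _ = f (sx q2 * ax q1) * q2 := by rw [map_mul]
          _ = f (om (sx q2) (ax q1) * sx q2) * q2 := by rw [← (hNR _ (hsx q2)).om_spec (ax q1)]
          _ = f (om (sx q2) (ax q1)) * (f (sx q2) * q2) := by rw [map_mul, mul_assoc]
          _ = f (om (sx q2) (ax q1)) * f (ax q2) := by rw [hax q2]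
          _ = f (om (sx q2) (ax q1) * ax q2) := by rw [map_mul]
      have h2 := hval (q1 * q2) _ _ hu12 e1
      have h3 : f' (h (sx q2 * sx q1)) * (φ0 q1 * φ0 q2) = f' (h (om (sx q2) (ax q1) * ax q2)) := by
        calc f' (h (sx q2 * sx q1)) * (φ0 q1 * φ0 q2)
            = f' (h (sx q2)) * (f' (h (sx q1)) * φ0 q1) * φ0 q2 := by
              rw [map_mul, map_mul, mul_assoc, ← mul_assoc (f' (h (sx q1))) (φ0 q1) (φ0 q2), ← mul_assoc]
          _ = f' (h (sx q2)) * f' (h (ax q1)) * φ0 q2 := by rw [hval q1 _ _ (hsx q1) (hax q1)]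
          _ = f' (h (sx q2 * ax q1)) * φ0 q2 := by rw [map_mul, map_mul]
          _ = f' (h (om (sx q2) (ax q1) * sx q2)) * φ0 q2 := by rw [← (hNR _ (hsx q2)).om_spec (ax q1)]
          _ = f' (h (om (sx q2) (ax q1))) * (f' (h (sx q2)) * φ0 q2) := by rw [map_mul, map_mul, mul_assoc]
          _ = f' (h (om (sx q2) (ax q1))) * f' (h (ax q2)) := by rw [hval q2 _ _ (hsx q2) (hax q2)]
          _ = f' (h (om (sx q2) (ax q1) * ax q2)) := by rw [map_mul, map_mul]
      exact (huf' _ hu12).mul_left_cancel (h2.trans h3.symm)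
    have haddφ : ∀ q1 q2 : Q, φ0 (q1 + q2) = φ0 q1 + φ0 q2 := by
      intro q1 q2
      have hu12 : (sx q2) * (sx q1) ∈ Sb := hmulS _ (hsx q2) _ (hsx q1)
      have e1 : f (sx q2 * sx q1) * q1 = f (sx q2 * ax q1) := by
        rw [map_mul, mul_assoc, hax q1, map_mul]
      have e2 : f (sx q2 * sx q1) * q2 = f (om (sx q2) (sx q1) * ax q2) := by
        calc f (sx q2 * sx q1) * q2
            = f (om (sx q2) (sx q1) * sx q2) * q2 := by rw [← (hNR _ (hsx q2)).om_spec (sx q1)]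
          _ = f (om (sx q2) (sx q1)) * (f (sx q2) * q2) := by rw [map_mul, mul_assoc]
          _ = f (om (sx q2) (sx q1)) * f (ax q2) := by rw [hax q2]
          _ = f (om (sx q2) (sx q1) * ax q2) := by rw [map_mul]
      have e3 : f (sx q2 * sx q1) * (q1 + q2) =
          f (sx q2 * ax q1 + om (sx q2) (sx q1) * ax q2) := by
        rw [mul_add, e1, e2, map_add]
      have h1 := hval (q1 + q2) _ _ hu12 e3
      have h2 := hval q1 _ _ hu12 e1
      have h3 := hval q2 _ _ hu12 e2
      apply (huf' _ hu12).mul_left_cancel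
      rw [mul_add, h1, h2, h3, map_add, map_add]
    set φ : Q →+* Q' :=
      { toFun := φ0, map_one' := hone, map_mul' := hmulφ, map_zero' := hzeroφ,
        map_add' := haddφ } with hφdef
    have hφapp : ∀ q : Q, φ q = φ0 q := fun q => rfl
    refine ⟨φ, ?_, ?_, ?_⟩
    · -- surjective
      intro q'
      obtain ⟨u, hu, b, he⟩ := hf'.surj q'
      obtain ⟨tA, htA, rfl⟩ := hu
      obtain ⟨a, rfl⟩ := hsurj b
      obtain ⟨w, hw⟩ := hf.isUnit tA htA
      refine ⟨↑w⁻¹ * f a, ?_⟩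
      have hq : f tA * (↑w⁻¹ * f a) = f a := by rw [← hw, Units.mul_inv_cancel_left]
      have hv1 := hval _ tA a htA hq
      rw [hφapp]
      exact (huf' tA htA).mul_left_cancel (hv1.trans he.symm)
    · -- kernel
      intro q
      rw [hφapp, ← hQrad]
      constructor
      · intro hq0
        have hfa0 : f' (h (ax q)) = 0 := by
          have hmm : (↑(huf' (sx q) (hsx q)).unit : Q') * φ0 q = 0 := by rw [hq0, mul_zero]
          rw [(huf' (sx q) (hsx q)).unit_spec] at hmm
          have hgoal : f' (h (ax q)) = f' (h (sx q)) * φ0 q :=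
            (isUnit_mul_inv_cancel_left (huf' (sx q) (hsx q)) (f' (h (ax q)))).symm
          rw [hgoal]
          exact hmm
        have hmem : h (ax q) ∈ lAss (h '' Sb) := (hf'.ker _).mp hfa0
        rw [hlassB] at hmem
        have haxN : ax q ∈ primeRadicalSet A := (hker _).mp hmem
        exact ⟨sx q, hsx q, ax q, haxN, hax q⟩
      · rintro ⟨s, hs, a, haN, he⟩
        have hcross := hcrossrep q s a hs he
        have hsaxN : s * ax q ∈ primeRadicalSet A := by
          rw [hcross]
          exact isIdealSet_primeRadical.mulL haN _
        have haxN : ax q ∈ primeRadicalSet A := hcanLN s hs _ hsaxN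
        have hax0 : h (ax q) = 0 := (hker _).mpr haxN
        show (↑(huf' (sx q) (hsx q)).unit⁻¹ : Q') * f' (h (ax q)) = 0
        rw [hax0, map_zero, mul_zero]
    · -- compatibility
      intro a
      have hv1 := hval (f a) 1 a h1S (by rw [map_one, one_mul])
      rw [map_one, map_one, one_mul] at hv1
      rw [hφapp]
      exact hv1

end BavulaMinPrimes
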